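/- Fix b ≥ 2 and N ≥ 1, and let m_* = ⌈log_φ(2b^N)⌉ + 4 where φ = (1+√5)/2. For all m ≥ m_*, if F_{m+k} = b^t · F_m + r with 1 ≤ t ≤ N, 0 ≤ r < b^t, and k ≥ 1, then necessarily k ≥ 2, F_{k+2} - F_{k-2} = b^t, k is odd, and r = F_{m-k}. -/

import Mathlib

lemma cassini (n : ℕ) : (Nat.fib (n+2) : ℤ) * Nat.fib n - (Nat.fib (n+1))^2 = (-1)^(n+1) := by
  induction n with
  | zero => simp
  | succ n ih =>
    have h2 : (Nat.fib (n+3) : ℤ) = Nat.fib (n+1) + Nat.fib (n+2) := by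
      exact_mod_cast Nat.fib_add_two (n := n+1)
    have h1 : (Nat.fib (n+2) : ℤ) = Nat.fib n + Nat.fib (n+1) := by
      exact_mod_cast Nat.fib_add_two (n := n)
    have : (-1:ℤ)^(n+1+1) = -(-1)^(n+1) := by ring
    rw [this, show n+1+2 = n+3 from rfl, show n+1+1=n+2 from rfl]
    linear_combination (Nat.fib (n+1):ℤ) * h2 - ih - (Nat.fib (n+2):ℤ) * h1

lemma fib_ident (n j : ℕ) :
    (Nat.fib (n + 2*(j+1)) : ℤ)
      = (Nat.fib (j+2) + Nat.fib j) * Nat.fib (n+(j+1)) - (-1)^(j+1) * Nat.fib n := by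
  have e1 : (Nat.fib (n + 2*(j+1)) : ℤ)
      = Nat.fib (n+j+1) * Nat.fib j + Nat.fib (n+j+2) * Nat.fib (j+1) := by
    have := Nat.fib_add (n+j+1) j
    rw [show n+j+1+j+1 = n + 2*(j+1) by ring] at this
    exact_mod_cast this
  have e2 : (Nat.fib (n+j+2) : ℤ) = Nat.fib n * Nat.fib (j+1) + Nat.fib (n+1) * Nat.fib (j+2) := by
    have := Nat.fib_add n (j+1)
    rw [show n+(j+1)+1 = n+j+2 by ring] at this
    exact_mod_cast this
  have e3 : (Nat.fib (n+j+1) : ℤ) = Nat.fib n * Nat.fib j + Nat.fib (n+1) * Nat.fib (j+1) := by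
    have := Nat.fib_add n j
    rw [show n+j+1 = n+j+1 by ring] at this
    exact_mod_cast this
  have e4 := cassini j
  rw [show n+(j+1) = n+j+1 by ring]
  linear_combination e1 + (Nat.fib (j+1):ℤ) * e2 - (Nat.fib (j+2):ℤ) * e3 - (Nat.fib n:ℤ) * e4

lemma gold_pow_le_fib (n : ℕ) : Real.goldenRatio ^ n ≤ (Nat.fib (n+2) : ℝ) := by
  induction n using Nat.twoStepInduction with
  | zero => simp
  | one => simpa [show Nat.fib 3 = 2 by rfl] using Real.goldenRatio_lt_two.le
  | more n ih1 ih2 =>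
    have key : Real.goldenRatio ^ (n+2) = Real.goldenRatio ^ (n+1) + Real.goldenRatio ^ n := by
      calc Real.goldenRatio^(n+2) = Real.goldenRatio^n * Real.goldenRatio^2 := by ring
      _ = Real.goldenRatio^n * (Real.goldenRatio + 1) := by rw [Real.goldenRatio_sq]
      _ = Real.goldenRatio^(n+1) + Real.goldenRatio^n := by ring
    rw [key]
    have hf : (Nat.fib (n+4) : ℝ) = Nat.fib (n+2) + Nat.fib (n+3) := by
      exact_mod_cast Nat.fib_add_two (n := n+2)
    rw [show n+2+2 = n+4 from rfl, hf]
    linarith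



lemma fib_lower (b N m : ℕ) (hb : 2 ≤ b)
    (hm : (⌈Real.logb ((1 + Real.sqrt 5) / 2) (2 * (b : ℝ) ^ N)⌉ + 4 : ℤ) ≤ (m : ℤ)) :
    2 * b ^ N ≤ Nat.fib m := by
  have hphi : ((1 + Real.sqrt 5) / 2) = Real.goldenRatio := rfl
  rw [hphi] at hm
  set x : ℝ := 2 * (b:ℝ)^N with hx
  have hx1 : (1:ℝ) ≤ x := by
    have hb1 : (1:ℝ) ≤ (b:ℝ) := by exact_mod_cast (by omega : 1 ≤ b)
    have : (1:ℝ) ≤ (b:ℝ)^N := one_le_pow₀ hb1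
    nlinarith
  have hlog0 : 0 ≤ Real.logb Real.goldenRatio x := Real.logb_nonneg Real.one_lt_goldenRatio hx1
  have hm4 : 4 ≤ m := by
    have h0 : (0:ℤ) ≤ ⌈Real.logb Real.goldenRatio x⌉ := Int.ceil_nonneg hlog0
    omega
  have hle : Real.logb Real.goldenRatio x ≤ ((m - 4 : ℕ) : ℝ) := by
    have h1 : Real.logb Real.goldenRatio x ≤ (⌈Real.logb Real.goldenRatio x⌉ : ℝ) := Int.le_ceil _
    have h2 : ((⌈Real.logb Real.goldenRatio x⌉ : ℤ) : ℝ) ≤ ((m:ℤ) - 4 : ℤ) := by exact_mod_cast (by omega : (⌈Real.logb Real.goldenRatio x⌉ : ℤ) ≤ (m:ℤ) - 4)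
    have h3 : (((m:ℤ) - 4 : ℤ) : ℝ) = ((m - 4 : ℕ) : ℝ) := by
      push_cast [Nat.cast_sub hm4]; ring
    linarith [h1, h2.trans_eq h3]
  have hxpos : 0 < x := by linarith
  have key : x ≤ Real.goldenRatio ^ (m - 4) := by
    calc x = Real.goldenRatio ^ Real.logb Real.goldenRatio x :=
          (Real.rpow_logb Real.goldenRatio_pos (ne_of_gt Real.one_lt_goldenRatio) hxpos).symm
    _ ≤ Real.goldenRatio ^ (((m-4:ℕ)):ℝ) :=
          Real.rpow_le_rpow_of_exponent_le Real.one_lt_goldenRatio.le hle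
    _ = Real.goldenRatio ^ (m-4) := Real.rpow_natCast _ _
  have key2 : Real.goldenRatio ^ (m-4) ≤ (Nat.fib m : ℝ) := by
    calc Real.goldenRatio ^ (m-4) ≤ (Nat.fib (m-4+2) : ℝ) := gold_pow_le_fib _
    _ ≤ (Nat.fib m : ℝ) := by
        exact_mod_cast Nat.fib_mono (by omega)
  have : x ≤ (Nat.fib m : ℝ) := key.trans key2
  rw [hx] at this
  exact_mod_cast this

set_option maxHeartbeats 2000000 in
theorem fib_rigidity (b N m k t r : ℕ)
    (hb : 2 ≤ b) (hN : 1 ≤ N)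
    (hm : (⌈Real.logb ((1 + Real.sqrt 5) / 2) (2 * (b : ℝ) ^ N)⌉ + 4 : ℤ) ≤ (m : ℤ))
    (hk : 1 ≤ k) (ht1 : 1 ≤ t) (htN : t ≤ N) (hr : r < b ^ t)
    (hstep : Nat.fib (m + k) = b ^ t * Nat.fib m + r) :
    2 ≤ k ∧ Nat.fib (k + 2) - Nat.fib (k - 2) = b ^ t ∧ Odd k ∧ r = Nat.fib (m - k) := by
  have hFm : 2 * b ^ N ≤ Nat.fib m := fib_lower b N m hb hm
  have hbtN : b ^ t ≤ b ^ N := Nat.pow_le_pow_right (by omega) htN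
  have hbt2 : 2 ≤ b ^ t := by
    calc 2 ≤ b := hb
    _ = b ^ 1 := (pow_one b).symm
    _ ≤ b ^ t := Nat.pow_le_pow_right (by omega) ht1
  have hbN4 : 4 ≤ 2 * b ^ N := by nlinarith
  have hm5 : 5 ≤ m := by
    by_contra h
    push_neg at h
    interval_cases m <;> simp_all [Nat.fib] <;> omega
  -- k ≤ m
  have hkm : k ≤ m := by
    by_contra h
    push_neg at h
    have h1 : Nat.fib (2*m+1) ≤ Nat.fib (m + k) := Nat.fib_mono (by omega)
    have h2 : Nat.fib (2*m+1) = Nat.fib m * Nat.fib m + Nat.fib (m+1) * Nat.fib (m+1) := by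
      have := Nat.fib_add m m
      rw [show m + m + 1 = 2*m+1 by ring] at this
      exact this
    have h3 : Nat.fib m ≤ Nat.fib (m+1) := Nat.fib_mono (by omega)
    have h4 : 4 ≤ Nat.fib m := le_trans hbN4 hFm
    nlinarith [hstep, hr, hbtN, hFm]
  obtain ⟨j, rfl⟩ : ∃ j, k = j + 1 := ⟨k - 1, by omega⟩
  obtain ⟨n, hmn⟩ : ∃ n, m = n + (j + 1) := ⟨m - (j+1), by omega⟩
  have hident : (Nat.fib (m + (j+1)) : ℤ)
      = ((Nat.fib (j+2) : ℤ) + Nat.fib j) * Nat.fib m - (-1)^(j+1) * Nat.fib n := by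
    have h := fib_ident n j
    rw [show n + 2*(j+1) = m + (j+1) by omega, show n + (j+1) = m by omega] at h
    exact h
  have hstepZ : (Nat.fib (m + (j+1)) : ℤ) = (b:ℤ)^t * Nat.fib m + r := by exact_mod_cast hstep
  have E : ((Nat.fib (j+2) : ℤ) + Nat.fib j - (b:ℤ)^t) * Nat.fib m
      = r + (-1)^(j+1) * Nat.fib n := by linear_combination hstepZ - hident
  have hFmZ : (4:ℤ) ≤ (Nat.fib m : ℤ) := by exact_mod_cast le_trans hbN4 hFm
  have hbtZ : (2:ℤ) ≤ (b:ℤ)^t := by exact_mod_cast hbt2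
  have hrZ : (r:ℤ) < (b:ℤ)^t := by exact_mod_cast hr
  have h2bt : 2 * (b:ℤ)^t ≤ (Nat.fib m : ℤ) := by
    have h5 : 2 * b ^ t ≤ Nat.fib m := le_trans (by omega) hFm
    exact_mod_cast h5
  have hfn0 : (0:ℤ) ≤ (Nat.fib n : ℤ) := by positivity
  have hr0 : (0:ℤ) ≤ (r:ℤ) := by positivity
  -- rule out k = 1
  have hj1 : 1 ≤ j := by
    by_contra h
    have hj0 : j = 0 := by omega
    subst hj0
    have hfn : (Nat.fib n : ℤ) < Nat.fib m := by
      have h1 : Nat.fib n ≤ Nat.fib (m-1) := Nat.fib_mono (by omega)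
      have h2 : Nat.fib (m-1) < Nat.fib m := by
        have h3 := Nat.fib_lt_fib_succ (n := m-1) (by omega)
        rwa [show m - 1 + 1 = m by omega] at h3
      have h4 : Nat.fib n < Nat.fib m := by omega
      exact_mod_cast h4
    have hsg : ((-1:ℤ))^(0+1) = -1 := by norm_num
    rw [hsg] at E
    have hfib2 : (Nat.fib 2 : ℤ) = 1 := by norm_num
    have hfib0 : (Nat.fib 0 : ℤ) = 0 := by norm_num
    rw [show (0:ℕ)+2 = 2 from rfl, hfib2, hfib0] at E
    have hle : (1 + 0 - (b:ℤ)^t) * (Nat.fib m : ℤ) ≤ -(Nat.fib m : ℤ) := by nlinarith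
    linarith
  -- now k ≥ 2, n ≤ m - 2
  have hfn2 : (Nat.fib n : ℤ) ≤ (Nat.fib (m-2) : ℤ) := by
    exact_mod_cast Nat.fib_mono (show n ≤ m - 2 by omega)
  have h2fm2 : 2 * (Nat.fib (m-2) : ℤ) ≤ (Nat.fib m : ℤ) := by
    have h1 := Nat.fib_mono (show m-2 ≤ m-1 by omega)
    have h2 : Nat.fib (m-2) + Nat.fib (m-1) = Nat.fib m := by
      have h4 := Nat.fib_add_two (n := m-2)
      rw [show m - 2 + 1 = m - 1 by omega, show m - 2 + 2 = m by omega] at h4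
      omega
    have h3 : 2 * Nat.fib (m-2) ≤ Nat.fib m := by omega
    exact_mod_cast h3
  -- |RHS| < fib m, so L = b^t
  have hRlt : (r:ℤ) + (-1)^(j+1) * Nat.fib n < Nat.fib m ∧
      -(Nat.fib m : ℤ) < r + (-1)^(j+1) * Nat.fib n := by
    rcases Nat.even_or_odd (j+1) with he | ho
    · have hp : ((-1:ℤ))^(j+1) = 1 := Even.neg_one_pow he
      rw [hp, one_mul]
      constructor <;> linarith
    · have hp : ((-1:ℤ))^(j+1) = -1 := Odd.neg_one_pow ho
      rw [hp]
      constructor <;> linarith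
  have hX : (Nat.fib (j+2) : ℤ) + Nat.fib j - (b:ℤ)^t = 0 := by
    rcases lt_trichotomy ((Nat.fib (j+2) : ℤ) + Nat.fib j - (b:ℤ)^t) 0 with h | h | h
    · exfalso
      have h1 : (Nat.fib (j+2) : ℤ) + Nat.fib j - (b:ℤ)^t ≤ -1 := by omega
      have h2 := mul_le_mul_of_nonneg_right h1 (show (0:ℤ) ≤ Nat.fib m by linarith)
      rw [E] at h2
      linarith [hRlt.2]
    · exact h
    · exfalso
      have h1 : 1 ≤ (Nat.fib (j+2) : ℤ) + Nat.fib j - (b:ℤ)^t := by omega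
      have h2 := mul_le_mul_of_nonneg_right h1 (show (0:ℤ) ≤ Nat.fib m by linarith)
      rw [E] at h2
      linarith [hRlt.1]
  have hR0 : (r:ℤ) + (-1)^(j+1) * Nat.fib n = 0 := by
    rw [hX, zero_mul] at E
    linarith [E]
  -- k even impossible
  have hodd : Odd (j+1) := by
    rcases Nat.even_or_odd (j+1) with he | ho
    · exfalso
      have hp : ((-1:ℤ))^(j+1) = 1 := Even.neg_one_pow he
      rw [hp, one_mul] at hR0
      have hfn00 : (Nat.fib n : ℤ) = 0 := by linarith
      have hn0 : n = 0 := by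
        by_contra hnn
        have h1 : 1 ≤ Nat.fib n := Nat.fib_pos.mpr (by omega)
        have h2 : (1:ℤ) ≤ Nat.fib n := by exact_mod_cast h1
        linarith
      -- m = j+1, so fib (j+2) ≥ fib m, giving b^t ≥ fib m ≥ 2 b^t
      have hmj : m ≤ j + 2 := by omega
      have h1 : Nat.fib m ≤ Nat.fib (j+2) := Nat.fib_mono hmj
      have h2 : (Nat.fib m : ℤ) ≤ Nat.fib (j+2) := by exact_mod_cast h1
      have h3 : (0:ℤ) ≤ Nat.fib j := by positivity
      linarith
    · exact ho
  have hsign : ((-1:ℤ))^(j+1) = -1 := Odd.neg_one_pow hodd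
  rw [hsign] at hR0
  have hrfib : r = Nat.fib n := by
    have : (r:ℤ) = Nat.fib n := by linarith
    exact_mod_cast this
  obtain ⟨i, rfl⟩ : ∃ i, j = i + 1 := ⟨j - 1, by omega⟩
  have hLb : Nat.fib (i+3) + Nat.fib (i+1) = b ^ t := by
    have h1 : (Nat.fib (i+3) : ℤ) + Nat.fib (i+1) = (b:ℤ)^t := by
      push_cast at hX ⊢
      linarith [hX]
    exact_mod_cast h1
  refine ⟨by omega, ?_, hodd, ?_⟩
  · have e1 : Nat.fib (i+4) = Nat.fib (i+2) + Nat.fib (i+3) := Nat.fib_add_two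
    have e2 : Nat.fib (i+2) = Nat.fib i + Nat.fib (i+1) := Nat.fib_add_two
    rw [show i + 1 + 1 + 2 = i + 4 by omega, show i + 1 + 1 - 2 = i by omega]
    omega
  · rw [show m - (i + 1 + 1) = n by omega]
    exact hrfib
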